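/- Every connected open planar trivalent graph has an internal face with at most five edges, or a growth region. -/

import Mathlib

/-- The setoid on darts whose classes are the cycles (orbits) of a permutation. -/
def Equiv.Perm.cycleSetoid {D : Type*} (f : Equiv.Perm D) : Setoid D :=
  ⟨f.SameCycle, ⟨fun x => Equiv.Perm.SameCycle.refl f x,
    fun h => h.symm, fun h h' => h.trans h'⟩⟩

/-- A connected open planar trivalent graph: a trivalent graph embedded in a
disc, meeting the boundary circle in `n ≥ 1` points.  It is encoded as a
combinatorial map on the sphere obtained by adding the boundary circle of the
disc to the graph: darts `D`, edge involution `α` (fixed-point free), vertex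
permutation `σ` with all orbits of size `3` (boundary points become trivalent
vertices: two boundary arcs and one graph edge).  The predicate `bdry` marks
the darts of the boundary arcs of the disc; `outD` is a dart of the outer face
(the outside of the disc), which consists entirely of boundary-arc darts, and
every boundary arc has one side on the outer face.  Faces are orbits of
`σ * α`; connectivity and planarity (Euler's formula) are as usual. -/
structure OpenPlanarTrivalentGraph where
  D : Type
  fintypeD : Fintype D
  σ : Equiv.Perm D
  α : Equiv.Perm D
  bdry : D → Prop
  α_invol : ∀ d, α (α d) = d
  α_fpf : ∀ d, α d ≠ d
  σ_cube : ∀ d, σ (σ (σ d)) = d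
  σ_fpf : ∀ d, σ d ≠ d
  bdry_edge : ∀ d, bdry (α d) ↔ bdry d
  /-- every vertex meeting the boundary circle has exactly two boundary-arc darts -/
  bdry_vertex : ∀ d, bdry d →
    ((bdry (σ d) ∧ ¬ bdry (σ (σ d))) ∨ (¬ bdry (σ d) ∧ bdry (σ (σ d))))
  outD : D
  out_bdry : bdry outD
  outer_all_bdry : ∀ d, (σ * α).SameCycle outD d → bdry d
  bdry_near_outer : ∀ d, bdry d →
    ((σ * α).SameCycle outD d ∨ (σ * α).SameCycle outD (α d))
  connected : ∀ d d' : D, ∃ g ∈ Subgroup.closure ({σ, α} : Set (Equiv.Perm D)), g d = d'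
  euler : 2 * (Nat.card (Quotient σ.cycleSetoid) + Nat.card (Quotient (σ * α).cycleSetoid))
            = Nat.card D + 4

namespace OpenPlanarTrivalentGraph

variable (G : OpenPlanarTrivalentGraph)

instance : Fintype G.D := G.fintypeD

/-- The face permutation. -/
def φ : Equiv.Perm G.D := G.σ * G.α

/-- The faces: orbits of the face permutation (including the outer face). -/
def Faces := Quotient G.φ.cycleSetoid

/-- The face containing a given dart. -/
def faceOf (d : G.D) : G.Faces := Quotient.mk G.φ.cycleSetoid d

/-- The outer face (the outside of the disc). -/
def outerFace : G.Faces := G.faceOf G.outD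

/-- An internal face: a face, other than the outer face, not touching the
boundary of the disc. -/
def InternalFace (F : G.Faces) : Prop :=
  F ≠ G.outerFace ∧ ∀ d : G.D, G.faceOf d = F → ¬ G.bdry d

/-- A boundary face: a face, other than the outer face, touching the boundary
circle of the disc. -/
def BoundaryFace (F : G.Faces) : Prop :=
  F ≠ G.outerFace ∧ ∃ d : G.D, G.faceOf d = F ∧ G.bdry d

/-- The number of (graph-)edges a face touches, with multiplicity: the number
of non-boundary darts in the corresponding orbit. -/
noncomputable def faceEdges (F : G.Faces) : ℕ :=
  Nat.card {d : G.D // G.faceOf d = F ∧ ¬ G.bdry d}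

/-- The number of disjoint boundary intervals a face meets: the number of
maximal runs of boundary-arc darts in the corresponding orbit. -/
noncomputable def faceIntervals (F : G.Faces) : ℕ :=
  Nat.card {d : G.D // G.faceOf d = F ∧ G.bdry d ∧ ¬ G.bdry (G.φ⁻¹ d)}

/-- The charge `6 - n - 2m` of a face touching `n` edges and `m` disjoint
boundary intervals.  (For an internal `n`-gon this is `6 - n`; for a boundary
face meeting the boundary in a single interval it is `4 - n`.) -/
noncomputable def charge (F : G.Faces) : ℤ :=
  6 - (G.faceEdges F : ℤ) - 2 * (G.faceIntervals F : ℤ)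

/-- Two boundary faces are consecutive along the boundary circle when they are
separated by a graph edge meeting the boundary. -/
def BFAdj (F F' : G.Faces) : Prop :=
  F ≠ F' ∧ ∃ d : G.D, ¬ G.bdry d ∧ (G.bdry (G.σ d) ∨ G.bdry (G.σ (G.σ d))) ∧
    G.faceOf d = F ∧ G.faceOf (G.α d) = F'

/-- A boundary region: a small neighborhood of a contiguous proper subset of
the boundary faces, recorded by the set of boundary faces it contains. -/
def BoundaryRegion (R : Set G.Faces) : Prop :=
  R.Nonempty ∧ (∀ F ∈ R, G.BoundaryFace F) ∧ (∃ F, G.BoundaryFace F ∧ F ∉ R) ∧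
    ∀ F ∈ R, ∀ F' ∈ R,
      Relation.ReflTransGen (fun A B => G.BFAdj A B ∧ A ∈ R ∧ B ∈ R) F F'

/-- The darts of the graph edges of a boundary region: non-boundary darts whose
edge touches one of the faces of the region. -/
def RegionDart (R : Set G.Faces) (d : G.D) : Prop :=
  ¬ G.bdry d ∧ (G.faceOf d ∈ R ∨ G.faceOf (G.α d) ∈ R)

/-- A graph edge meets the boundary circle when one of its endpoints is a
vertex on the boundary. -/
def MeetsBoundary (d : G.D) : Prop :=
  G.bdry (G.σ d) ∨ G.bdry (G.σ (G.σ d)) ∨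
    G.bdry (G.σ (G.α d)) ∨ G.bdry (G.σ (G.σ (G.α d)))

/-- The number of edges of a boundary region meeting the boundary of the disc
("outgoing edges"). -/
noncomputable def outgoing (R : Set G.Faces) : ℕ :=
  Nat.card {d : G.D // G.RegionDart R d ∧ G.MeetsBoundary d} / 2

/-- The number of edges of a boundary region not meeting the boundary of the
disc ("incoming edges"). -/
noncomputable def incoming (R : Set G.Faces) : ℕ :=
  Nat.card {d : G.D // G.RegionDart R d ∧ ¬ G.MeetsBoundary d} / 2

/-- A growth region: a boundary region with more edges meeting the boundary of
the disc than edges not meeting it. -/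
def GrowthRegion (R : Set G.Faces) : Prop :=
  G.BoundaryRegion R ∧ G.incoming R < G.outgoing R


/-! ### Auxiliary lemmas -/

section Aux

noncomputable instance : Fintype G.Faces := @Fintype.ofFinite _ (Quotient.finite _)

/- basic permutation facts -/

lemma perm_apply_inv_self {X : Type*} (f : Equiv.Perm X) (x : X) : f (f⁻¹ x) = x :=
  f.apply_symm_apply x

lemma perm_inv_apply_self {X : Type*} (f : Equiv.Perm X) (x : X) : f⁻¹ (f x) = x :=
  f.symm_apply_apply x

lemma alpha_inv_apply (d : G.D) : G.α⁻¹ d = G.α d := by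
  rw [Equiv.Perm.inv_eq_iff_eq]; exact (G.α_invol d).symm

lemma sigma_inv_apply (d : G.D) : G.σ⁻¹ d = G.σ (G.σ d) := by
  rw [Equiv.Perm.inv_eq_iff_eq]; exact (G.σ_cube d).symm

lemma phi_apply (d : G.D) : G.φ d = G.σ (G.α d) := rfl

lemma phi_inv_apply (d : G.D) : G.φ⁻¹ d = G.α (G.σ⁻¹ d) := by
  rw [Equiv.Perm.inv_eq_iff_eq, phi_apply, G.α_invol, perm_apply_inv_self]

lemma bdry_phi_inv (d : G.D) : G.bdry (G.φ⁻¹ d) ↔ G.bdry (G.σ⁻¹ d) := by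
  rw [phi_inv_apply]; exact G.bdry_edge _

lemma faceOf_eq_iff {x y : G.D} : G.faceOf x = G.faceOf y ↔ G.φ.SameCycle x y :=
  ⟨fun h => Quotient.eq''.mp h, fun h => Quotient.sound h⟩

lemma faceOf_phi_inv (x : G.D) : G.faceOf (G.φ⁻¹ x) = G.faceOf x :=
  G.faceOf_eq_iff.mpr ⟨1, by simp⟩

lemma faceOf_pow (n : ℕ) (x : G.D) : G.faceOf ((G.φ ^ n) x) = G.faceOf x :=
  G.faceOf_eq_iff.mpr ⟨-(n : ℤ), by simp⟩

lemma bdry_of_outer {d : G.D} (h : G.faceOf d = G.outerFace) : G.bdry d :=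
  G.outer_all_bdry d ((G.faceOf_eq_iff.mp h).symm)

lemma sigma_pow_three : G.σ ^ 3 = 1 := by
  ext d
  simp only [pow_succ, pow_zero, one_mul, Equiv.Perm.mul_apply, Equiv.Perm.one_apply]
  exact G.σ_cube d

lemma zpow_reduce (k : ℤ) (d : G.D) :
    ∃ r : ℤ, 0 ≤ r ∧ r < 3 ∧ (G.σ ^ k) d = (G.σ ^ r) d := by
  refine ⟨k % 3, Int.emod_nonneg k (by norm_num), Int.emod_lt_of_pos k (by norm_num), ?_⟩
  have h3 : G.σ ^ (3 : ℤ) = 1 := by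
    rw [show (3:ℤ) = ((3:ℕ):ℤ) from rfl, zpow_natCast, G.sigma_pow_three]
  conv_lhs => rw [← Int.mul_ediv_add_emod k 3]
  rw [zpow_add, zpow_mul, h3, one_zpow, one_mul]

lemma sigma_class (d x : G.D) :
    G.σ.SameCycle d x ↔ (x = d ∨ x = G.σ d ∨ x = G.σ (G.σ d)) := by
  constructor
  · rintro ⟨k, hk⟩
    obtain ⟨r, hr0, hr3, he⟩ := G.zpow_reduce k d
    rw [he] at hk
    interval_cases r
    · left; rw [← hk]; simp
    · right; left; rw [← hk]; simp
    · right; right; rw [← hk]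
      rw [show (2:ℤ) = ((2:ℕ):ℤ) from rfl, zpow_natCast, sq, Equiv.Perm.mul_apply]
  · rintro (rfl | rfl | rfl)
    · exact ⟨0, by simp⟩
    · exact ⟨1, by simp⟩
    · refine ⟨2, ?_⟩
      rw [show (2:ℤ) = ((2:ℕ):ℤ) from rfl, zpow_natCast, sq, Equiv.Perm.mul_apply]

/- counting fibers -/

lemma card_subtype_eq_sum_fibers {X Q : Type} [Fintype X] [Fintype Q] (f : X → Q)
    (p : X → Prop) :
    Nat.card {x // p x} = ∑ q : Q, Nat.card {x // f x = q ∧ p x} := by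
  classical
  rw [Nat.card_eq_fintype_card, Fintype.card_subtype,
    Finset.card_eq_sum_card_fiberwise (f := f) (t := Finset.univ) fun x _ => Finset.mem_univ _]
  refine Finset.sum_congr rfl fun q _ => ?_
  rw [Nat.card_eq_fintype_card, Fintype.card_subtype]
  congr 1
  ext x
  simp [Finset.mem_filter, and_comm]

lemma card_darts : Nat.card G.D = 3 * Nat.card (Quotient G.σ.cycleSetoid) := by
  classical
  have h1 : Nat.card G.D = ∑ q : Quotient G.σ.cycleSetoid,
      Nat.card {x : G.D // Quotient.mk G.σ.cycleSetoid x = q} := by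
    rw [Nat.card_eq_fintype_card, ← Finset.card_univ,
      Finset.card_eq_sum_card_fiberwise (f := Quotient.mk G.σ.cycleSetoid) (t := Finset.univ)
        fun x _ => Finset.mem_univ _]
    exact Finset.sum_congr rfl fun q _ => by
      rw [Nat.card_eq_fintype_card, Fintype.card_subtype]
  have hfib : ∀ q : Quotient G.σ.cycleSetoid,
      Nat.card {x : G.D // Quotient.mk G.σ.cycleSetoid x = q} = 3 := by
    intro q
    obtain ⟨d, rfl⟩ := Quotient.exists_rep q
    have hset : {x : G.D | Quotient.mk G.σ.cycleSetoid x = Quotient.mk G.σ.cycleSetoid d}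
        = {d, G.σ d, G.σ (G.σ d)} := by
      ext x
      simp only [Set.mem_setOf_eq, Set.mem_insert_iff, Set.mem_singleton_iff]
      constructor
      · intro h
        exact (G.sigma_class d x).mp (Equiv.Perm.SameCycle.symm (Quotient.eq''.mp h))
      · intro h
        exact Quotient.sound (Equiv.Perm.SameCycle.symm ((G.sigma_class d x).mpr h))
    have hd1 : d ≠ G.σ d := fun h => G.σ_fpf d h.symm
    have hd2 : G.σ d ≠ G.σ (G.σ d) := fun h => G.σ_fpf (G.σ d) h.symm
    have hd3 : d ≠ G.σ (G.σ d) := by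
      intro h
      have := congrArg G.σ h
      rw [G.σ_cube d] at this
      exact G.σ_fpf d this
    have : Nat.card {x : G.D // Quotient.mk G.σ.cycleSetoid x = Quotient.mk G.σ.cycleSetoid d}
        = ({d, G.σ d, G.σ (G.σ d)} : Set G.D).ncard := by
      rw [← hset]; exact Nat.card_coe_set_eq _
    rw [this, Set.ncard_insert_of_notMem (by simp [hd1, hd3]),
      Set.ncard_pair hd2]
  rw [h1, Finset.sum_congr rfl fun q _ => hfib q, Finset.sum_const, smul_eq_mul,
    Finset.card_univ, ← Nat.card_eq_fintype_card, mul_comm]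

lemma card_bdry_add :
    Nat.card {d : G.D // G.bdry d} + Nat.card {d : G.D // ¬ G.bdry d} = Nat.card G.D := by
  classical
  rw [Nat.card_eq_fintype_card, Nat.card_eq_fintype_card, Nat.card_eq_fintype_card,
    Fintype.card_subtype, Fintype.card_subtype, ← Finset.card_univ]
  exact Finset.card_filter_add_card_filter_not _

lemma card_bdry_eq_two_mul :
    Nat.card {d : G.D // G.bdry d}
      = 2 * Nat.card {d : G.D // G.bdry d ∧ ¬ G.bdry (G.σ⁻¹ d)} := by
  classical
  rw [Nat.card_eq_fintype_card, Nat.card_eq_fintype_card, Fintype.card_subtype,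
    Fintype.card_subtype]
  have hsplit : (Finset.univ.filter fun d : G.D => G.bdry d ∧ G.bdry (G.σ⁻¹ d)).card
      + (Finset.univ.filter fun d : G.D => G.bdry d ∧ ¬ G.bdry (G.σ⁻¹ d)).card
      = (Finset.univ.filter fun d : G.D => G.bdry d).card := by
    rw [← Finset.filter_filter, ← Finset.filter_filter]
    exact Finset.card_filter_add_card_filter_not _
  have hbij : (Finset.univ.filter fun d : G.D => G.bdry d ∧ G.bdry (G.σ⁻¹ d)).card
      = (Finset.univ.filter fun d : G.D => G.bdry d ∧ ¬ G.bdry (G.σ⁻¹ d)).card := by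
    apply Finset.card_bij (fun d _ => G.σ⁻¹ d)
    · intro a ha
      simp only [Finset.mem_filter, Finset.mem_univ, true_and] at ha ⊢
      obtain ⟨h1, h2⟩ := ha
      refine ⟨h2, ?_⟩
      have hss : G.σ⁻¹ (G.σ⁻¹ a) = G.σ a := by
        rw [G.sigma_inv_apply a, G.sigma_inv_apply (G.σ (G.σ a))]
        exact G.σ_cube (G.σ a)
      rw [hss]
      rcases G.bdry_vertex a h1 with ⟨_, hb2⟩ | ⟨hb1, _⟩
      · rw [G.sigma_inv_apply] at h2; exact absurd h2 hb2
      · exact hb1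
    · intro a _ b _ h
      exact (Equiv.injective _) h
    · intro b hb
      simp only [Finset.mem_filter, Finset.mem_univ, true_and] at hb
      obtain ⟨h1, h2⟩ := hb
      refine ⟨G.σ b, ?_, by rw [perm_inv_apply_self]⟩
      simp only [Finset.mem_filter, Finset.mem_univ, true_and]
      constructor
      · rcases G.bdry_vertex b h1 with ⟨hb1, _⟩ | ⟨_, hb2⟩
        · exact hb1
        · rw [G.sigma_inv_apply] at h2; exact absurd hb2 h2
      · rw [perm_inv_apply_self]; exact h1
  omega

lemma sum_faceEdges :
    ∑ F : G.Faces, G.faceEdges F = Nat.card {d : G.D // ¬ G.bdry d} :=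
  (card_subtype_eq_sum_fibers G.faceOf (fun d => ¬ G.bdry d)).symm

lemma sum_faceIntervals :
    ∑ F : G.Faces, G.faceIntervals F
      = Nat.card {d : G.D // G.bdry d ∧ ¬ G.bdry (G.φ⁻¹ d)} :=
  (card_subtype_eq_sum_fibers G.faceOf (fun d => G.bdry d ∧ ¬ G.bdry (G.φ⁻¹ d))).symm

lemma charge_def (F : G.Faces) :
    G.charge F = 6 - (G.faceEdges F : ℤ) - 2 * (G.faceIntervals F : ℤ) := rfl

lemma sum_charge : ∑ F : G.Faces, G.charge F = 12 := by
  classical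
  have h1 := G.sum_faceEdges
  have h2 : ∑ F : G.Faces, G.faceIntervals F
      = Nat.card {d : G.D // G.bdry d ∧ ¬ G.bdry (G.σ⁻¹ d)} := by
    rw [G.sum_faceIntervals]
    exact Nat.card_congr (Equiv.subtypeEquivRight fun d =>
      and_congr_right fun _ => not_congr (G.bdry_phi_inv d))
  have h3 := G.card_bdry_add
  have h4 := G.card_bdry_eq_two_mul
  have h5 := G.card_darts
  have h6 := G.euler
  have hQ : Nat.card (Quotient (G.σ * G.α).cycleSetoid) = Fintype.card G.Faces := by
    show Nat.card G.Faces = _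
    exact Nat.card_eq_fintype_card
  have hkey : 6 * Fintype.card G.Faces
      = (∑ F : G.Faces, G.faceEdges F) + 2 * (∑ F : G.Faces, G.faceIntervals F) + 12 := by
    omega
  have hchg : ∑ F : G.Faces, G.charge F
      = 6 * (Fintype.card G.Faces : ℤ) - ((∑ F : G.Faces, G.faceEdges F : ℕ) : ℤ)
        - 2 * ((∑ F : G.Faces, G.faceIntervals F : ℕ) : ℤ) := by
    simp only [charge_def]
    rw [Finset.sum_sub_distrib, Finset.sum_sub_distrib, ← Finset.mul_sum, Finset.sum_const,
      Finset.card_univ, nsmul_eq_mul, Nat.cast_sum, Nat.cast_sum]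
    ring
  rw [hchg]
  omega

lemma charge_outer : G.charge G.outerFace = 6 := by
  have h1 : G.faceEdges G.outerFace = 0 := by
    have : IsEmpty {d : G.D // G.faceOf d = G.outerFace ∧ ¬ G.bdry d} :=
      ⟨fun y => y.2.2 (G.bdry_of_outer y.2.1)⟩
    exact Nat.card_of_isEmpty
  have h2 : G.faceIntervals G.outerFace = 0 := by
    have : IsEmpty {d : G.D // G.faceOf d = G.outerFace ∧ G.bdry d ∧ ¬ G.bdry (G.φ⁻¹ d)} :=
      ⟨fun y => y.2.2.2 (G.bdry_of_outer (by rw [G.faceOf_phi_inv]; exact y.2.1))⟩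
    exact Nat.card_of_isEmpty
  rw [charge_def, h1, h2]
  norm_num

/- existence of a non-boundary dart on every non-outer face -/

lemma exists_nonbdry {F : G.Faces} (hne : F ≠ G.outerFace) {d0 : G.D}
    (hd0 : G.faceOf d0 = F) (hb : G.bdry d0) :
    ∃ x, G.faceOf x = F ∧ ¬ G.bdry x := by
  by_contra h
  push_neg at h
  have h1 : G.bdry (G.σ⁻¹ d0) :=
    (G.bdry_phi_inv d0).mp (h _ (by rw [G.faceOf_phi_inv]; exact hd0))
  have h2 : G.φ.SameCycle G.outD (G.α d0) := by
    rcases G.bdry_near_outer d0 hb with hc | hc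
    · exact absurd (hd0.symm.trans (G.faceOf_eq_iff.mpr hc.symm)) hne
    · exact hc
  have h3 : G.bdry (G.σ d0) := by
    have h4 : G.φ.SameCycle G.outD (G.φ (G.α d0)) := h2.trans ⟨1, by simp⟩
    have h5 := G.outer_all_bdry _ h4
    rwa [G.phi_apply, G.α_invol] at h5
  rcases G.bdry_vertex d0 hb with ⟨_, hb2⟩ | ⟨hb1, _⟩
  · rw [G.sigma_inv_apply] at h1; exact hb2 h1
  · exact hb1 h3

/- walking along a face to the next interval start -/

lemma walk {x d0 : G.D} (hsc : G.φ.SameCycle x d0) (hx : ¬ G.bdry x) (hb0 : G.bdry d0) :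
    ∃ s : ℕ, 1 ≤ s ∧ G.bdry ((G.φ ^ s) x) ∧ ¬ G.bdry (G.φ⁻¹ ((G.φ ^ s) x))
      ∧ ∀ j, j < s → ¬ G.bdry ((G.φ ^ j) x) := by
  classical
  obtain ⟨n, _, _, hn⟩ := Equiv.Perm.SameCycle.exists_pow_eq G.φ hsc
  have hP : ∃ k, G.bdry ((G.φ ^ k) x) := ⟨n, by rw [hn]; exact hb0⟩
  have hspec : G.bdry ((G.φ ^ Nat.find hP) x) := Nat.find_spec hP
  have hmin : ∀ j, j < Nat.find hP → ¬ G.bdry ((G.φ ^ j) x) := fun j hj => Nat.find_min hP hj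
  have hs1 : 1 ≤ Nat.find hP := by
    rcases Nat.eq_zero_or_pos (Nat.find hP) with h | h
    · rw [h] at hspec; simp only [pow_zero, Equiv.Perm.one_apply] at hspec
      exact absurd hspec hx
    · exact h
  refine ⟨Nat.find hP, hs1, hspec, ?_, hmin⟩
  have heq : G.φ⁻¹ ((G.φ ^ Nat.find hP) x) = (G.φ ^ (Nat.find hP - 1)) x := by
    conv_lhs => rw [show Nat.find hP = (Nat.find hP - 1) + 1 by omega, pow_succ',
      Equiv.Perm.mul_apply, perm_inv_apply_self]
  rw [heq]
  exact hmin _ (by omega)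

lemma exists_start {F : G.Faces} (hF : G.BoundaryFace F) :
    ∃ s, G.faceOf s = F ∧ G.bdry s ∧ ¬ G.bdry (G.φ⁻¹ s) := by
  obtain ⟨hne, d0, hd0, hb0⟩ := hF
  obtain ⟨x, hxF, hx⟩ := G.exists_nonbdry hne hd0 hb0
  have hsc : G.φ.SameCycle x d0 := G.faceOf_eq_iff.mp (hxF.trans hd0.symm)
  obtain ⟨s, _, h1, h2, _⟩ := G.walk hsc hx hb0
  exact ⟨(G.φ ^ s) x, by rw [G.faceOf_pow]; exact hxF, h1, h2⟩

lemma intervals_pos {F : G.Faces} (hF : G.BoundaryFace F) : 0 < G.faceIntervals F := by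
  obtain ⟨s, h1, h2, h3⟩ := G.exists_start hF
  have : Nonempty {d : G.D // G.faceOf d = F ∧ G.bdry d ∧ ¬ G.bdry (G.φ⁻¹ d)} :=
    ⟨⟨s, h1, h2, h3⟩⟩
  exact Nat.card_pos

lemma edges_pos {F : G.Faces} (hF : G.BoundaryFace F) : 0 < G.faceEdges F := by
  obtain ⟨s, h1, _, h3⟩ := G.exists_start hF
  have : Nonempty {d : G.D // G.faceOf d = F ∧ ¬ G.bdry d} :=
    ⟨⟨G.φ⁻¹ s, by rw [G.faceOf_phi_inv]; exact h1, h3⟩⟩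
  exact Nat.card_pos

lemma intervals_le_edges (F : G.Faces) : G.faceIntervals F ≤ G.faceEdges F := by
  have key : ∀ y : {d : G.D // G.faceOf d = F ∧ G.bdry d ∧ ¬ G.bdry (G.φ⁻¹ d)},
      G.faceOf (G.φ⁻¹ y.1) = F ∧ ¬ G.bdry (G.φ⁻¹ y.1) :=
    fun y => ⟨by rw [G.faceOf_phi_inv]; exact y.2.1, y.2.2.2⟩
  exact Nat.card_le_card_of_injective
    (fun y => (⟨G.φ⁻¹ y.1, key y⟩ : {d : G.D // G.faceOf d = F ∧ ¬ G.bdry d}))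
    (fun a b hab => Subtype.ext ((Equiv.injective _) (congrArg Subtype.val hab)))

lemma charge_le_three {F : G.Faces} (hF : G.BoundaryFace F) : G.charge F ≤ 3 := by
  have h1 := G.intervals_pos hF
  have h2 := G.edges_pos hF
  rw [charge_def]
  omega

lemma start_unique {F : G.Faces} (hm : G.faceIntervals F = 1) {a b : G.D}
    (ha : G.faceOf a = F ∧ G.bdry a ∧ ¬ G.bdry (G.φ⁻¹ a))
    (hb : G.faceOf b = F ∧ G.bdry b ∧ ¬ G.bdry (G.φ⁻¹ b)) : a = b := by
  have hsub : Subsingleton {d : G.D // G.faceOf d = F ∧ G.bdry d ∧ ¬ G.bdry (G.φ⁻¹ d)} :=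
    (Nat.card_eq_one_iff_unique.mp hm).1
  exact congrArg Subtype.val (hsub.elim ⟨a, ha⟩ ⟨b, hb⟩)

lemma pow_inv_eq {s j : ℕ} {x d : G.D} (hj : j ≤ s) (hs : (G.φ ^ s) x = d) :
    (G.φ ^ j) x = (G.φ⁻¹ ^ (s - j)) d := by
  have h : (G.φ ^ (s - j)) ((G.φ ^ j) x) = d := by
    rw [← Equiv.Perm.mul_apply, ← pow_add, Nat.sub_add_cancel hj]; exact hs
  rw [← h, inv_pow, perm_inv_apply_self]

lemma classify {F : G.Faces} {d : G.D} (hdF : G.faceOf d = F) (hb : G.bdry d)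
    (hnb : ¬ G.bdry (G.φ⁻¹ d)) (hm : G.faceIntervals F = 1) (k : ℕ)
    (hbk : G.bdry ((G.φ⁻¹ ^ (k + 1)) d)) {x : G.D} (hxF : G.faceOf x = F)
    (hx : ¬ G.bdry x) :
    ∃ j, 1 ≤ j ∧ j ≤ k ∧ x = (G.φ⁻¹ ^ j) d := by
  have hsc : G.φ.SameCycle x d := G.faceOf_eq_iff.mp (hxF.trans hdF.symm)
  obtain ⟨s, hs1, h1, h2, h3⟩ := G.walk hsc hx hb
  have hsd : (G.φ ^ s) x = d :=
    G.start_unique hm ⟨by rw [G.faceOf_pow]; exact hxF, h1, h2⟩ ⟨hdF, hb, hnb⟩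
  have hxe : x = (G.φ⁻¹ ^ s) d := by
    have := G.pow_inv_eq (Nat.zero_le s) hsd
    simpa using this
  have hsk : s ≤ k := by
    by_contra hgt
    push_neg at hgt
    have hj : s - (k + 1) < s := by omega
    have := G.pow_inv_eq (show s - (k+1) ≤ s by omega) hsd
    rw [show s - (s - (k+1)) = k + 1 by omega] at this
    exact h3 _ hj (by rw [this]; exact hbk)
  exact ⟨s, hs1, hsk, hxe⟩

lemma pow_inv_succ (j : ℕ) (x : G.D) :
    (G.φ⁻¹ ^ (j + 1)) x = G.φ⁻¹ ((G.φ⁻¹ ^ j) x) := by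
  rw [pow_succ', Equiv.Perm.mul_apply]

lemma faceOf_pow_inv (j : ℕ) (x : G.D) : G.faceOf ((G.φ⁻¹ ^ j) x) = G.faceOf x := by
  rw [inv_pow]
  exact G.faceOf_eq_iff.mpr ⟨(j : ℤ), by simp⟩

/- MeetsBoundary facts -/

lemma meets_alpha (x : G.D) : G.MeetsBoundary (G.α x) ↔ G.MeetsBoundary x := by
  unfold MeetsBoundary
  rw [G.α_invol]
  tauto

lemma meets_of_phi_bdry {e : G.D} (h : G.bdry (G.φ e)) : G.MeetsBoundary e := by
  rw [G.phi_apply] at h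
  exact Or.inr (Or.inr (Or.inl h))

lemma meets_of_phi_inv_bdry {e : G.D} (h : G.bdry (G.φ⁻¹ e)) : G.MeetsBoundary e := by
  have heq : G.σ (G.σ e) = G.α (G.φ⁻¹ e) := by
    rw [G.phi_inv_apply, G.α_invol, G.sigma_inv_apply]
  exact Or.inr (Or.inl (by rw [heq]; exact (G.bdry_edge _).mpr h))

/- counting regions -/

lemma nat_card_eq_ncard (p : G.D → Prop) :
    Nat.card {x : G.D // p x} = {x : G.D | p x}.ncard :=
  Nat.card_coe_set_eq _

lemma incoming_eq_zero (R : Set G.Faces)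
    (h : ∀ x : G.D, G.RegionDart R x → G.MeetsBoundary x) : G.incoming R = 0 := by
  have he : IsEmpty {x : G.D // G.RegionDart R x ∧ ¬ G.MeetsBoundary x} :=
    ⟨fun y => y.2.2 (h y.1 y.2.1)⟩
  show Nat.card {x : G.D // G.RegionDart R x ∧ ¬ G.MeetsBoundary x} / 2 = 0
  rw [Nat.card_of_isEmpty]

lemma outgoing_ge (R : Set G.Faces) (c : ℕ) (S : Set G.D)
    (hS : S ⊆ {x : G.D | G.RegionDart R x ∧ G.MeetsBoundary x}) (hc : c * 2 ≤ S.ncard) :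
    c ≤ G.outgoing R := by
  show c ≤ Nat.card {x : G.D // G.RegionDart R x ∧ G.MeetsBoundary x} / 2
  rw [Nat.le_div_iff_mul_le (by norm_num)]
  calc c * 2 ≤ S.ncard := hc
    _ ≤ ({x : G.D | G.RegionDart R x ∧ G.MeetsBoundary x}).ncard :=
        Set.ncard_le_ncard hS (Set.toFinite _)
    _ = Nat.card {x : G.D // G.RegionDart R x ∧ G.MeetsBoundary x} :=
        (G.nat_card_eq_ncard _).symm

lemma incoming_le (R : Set G.Faces) (c : ℕ) (S : Set G.D)
    (hS : {x : G.D | G.RegionDart R x ∧ ¬ G.MeetsBoundary x} ⊆ S) (hc : S.ncard ≤ 2 * c) :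
    G.incoming R ≤ c := by
  show Nat.card {x : G.D // G.RegionDart R x ∧ ¬ G.MeetsBoundary x} / 2 ≤ c
  have h1 : Nat.card {x : G.D // G.RegionDart R x ∧ ¬ G.MeetsBoundary x} ≤ 2 * c := by
    rw [G.nat_card_eq_ncard]
    exact le_trans (Set.ncard_le_ncard hS (Set.toFinite _)) hc
  omega

/- the global charge argument -/

lemma exists_good (hno : ∀ F, G.InternalFace F → ¬ G.faceEdges F ≤ 5) :
    ∃ F, G.BoundaryFace F ∧ 1 ≤ G.charge F ∧ ∃ F', G.BoundaryFace F' ∧ F' ≠ F := by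
  classical
  have hsum := G.sum_charge
  have houter := G.charge_outer
  have h1 : ∑ F ∈ Finset.univ.erase G.outerFace, G.charge F = 6 := by
    have h := Finset.sum_erase_add Finset.univ G.charge (Finset.mem_univ G.outerFace)
    omega
  have hbd : ∀ F ∈ (Finset.univ.erase G.outerFace).filter (fun F => ¬ G.InternalFace F),
      G.BoundaryFace F := by
    intro F hF
    simp only [Finset.mem_filter, Finset.mem_erase, Finset.mem_univ, and_true, true_and] at hF
    obtain ⟨hne, hni⟩ := hF
    refine ⟨hne, ?_⟩
    by_contra h
    push_neg at h
    exact hni ⟨hne, fun dd hdd hbdd => h dd hdd hbdd⟩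
  have h3 : ∑ F ∈ (Finset.univ.erase G.outerFace).filter (fun F => G.InternalFace F),
      G.charge F ≤ 0 := by
    apply Finset.sum_nonpos
    intro F hF
    simp only [Finset.mem_filter] at hF
    have h6 : ¬ G.faceEdges F ≤ 5 := hno F hF.2
    rw [charge_def]
    omega
  have h2 : ∑ F ∈ (Finset.univ.erase G.outerFace).filter (fun F => G.InternalFace F), G.charge F
      + ∑ F ∈ (Finset.univ.erase G.outerFace).filter (fun F => ¬ G.InternalFace F), G.charge F
      = 6 := by
    rw [Finset.sum_filter_add_sum_filter_not]; exact h1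
  have hFex : ∃ F ∈ (Finset.univ.erase G.outerFace).filter (fun F => ¬ G.InternalFace F),
      1 ≤ G.charge F := by
    by_contra hc
    push_neg at hc
    have : ∑ F ∈ (Finset.univ.erase G.outerFace).filter (fun F => ¬ G.InternalFace F),
        G.charge F ≤ 0 := Finset.sum_nonpos fun F hF => by have := hc F hF; omega
    omega
  obtain ⟨F, hFmem, hF1⟩ := hFex
  refine ⟨F, hbd F hFmem, hF1, ?_⟩
  by_contra hc
  push_neg at hc
  have hsub : (Finset.univ.erase G.outerFace).filter (fun F => ¬ G.InternalFace F) ⊆ {F} :=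
    fun F'' h => Finset.mem_singleton.mpr (hc F'' (hbd F'' h))
  rcases Finset.subset_singleton_iff.mp hsub with h | h
  · rw [h] at hFmem; simp at hFmem
  · have hsum1 : ∑ F' ∈ (Finset.univ.erase G.outerFace).filter (fun F => ¬ G.InternalFace F),
        G.charge F' = G.charge F := by rw [h, Finset.sum_singleton]
    have h3' := G.charge_le_three (hbd F hFmem)
    omega

end Aux
/-- Every connected open planar trivalent graph has an internal face with at
most five edges, or a growth region. -/
theorem stmt_16 (G : OpenPlanarTrivalentGraph) :
    (∃ F : G.Faces, G.InternalFace F ∧ G.faceEdges F ≤ 5) ∨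
      ∃ R : Set G.Faces, G.GrowthRegion R := by
  classical
  by_cases hsmall : ∃ F : G.Faces, G.InternalFace F ∧ G.faceEdges F ≤ 5
  · exact Or.inl hsmall
  right
  have hno : ∀ F, G.InternalFace F → ¬ G.faceEdges F ≤ 5 := by
    intro F hF hle; exact hsmall ⟨F, hF, hle⟩
  obtain ⟨F, hBF, hQ1, F', hBF', hne'⟩ := G.exists_good hno
  obtain ⟨d, hdF, hdb, hdnb⟩ := G.exists_start hBF
  have hm0 := G.intervals_pos hBF
  have hmn := G.intervals_le_edges F
  have hchg := G.charge_def F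
  have hm1 : G.faceIntervals F = 1 := by rw [hchg] at hQ1; omega
  have hn3 : G.faceEdges F ≤ 3 := by rw [hchg] at hQ1; omega
  -- the singleton boundary region
  have hreg : G.BoundaryRegion {F} := by
    refine ⟨⟨F, rfl⟩, ?_, ⟨F', hBF', ?_⟩, ?_⟩
    · intro F'' h; rw [Set.mem_singleton_iff] at h; rw [h]; exact hBF
    · simp only [Set.mem_singleton_iff]; exact hne'
    · intro A hA B hB
      rw [Set.mem_singleton_iff] at hA hB
      rw [hA, hB]
  -- dart bookkeeping
  set b1 := G.φ⁻¹ d with hb1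
  set b2 := G.φ⁻¹ b1 with hb2
  set b3 := G.φ⁻¹ b2 with hb3
  have hnb1 : ¬ G.bdry b1 := hdnb
  have hf1 : G.faceOf b1 = F := by rw [hb1, G.faceOf_phi_inv]; exact hdF
  have hmb1 : G.MeetsBoundary b1 :=
    G.meets_of_phi_bdry (by rw [hb1, perm_apply_inv_self]; exact hdb)
  have hpow1 : (G.φ⁻¹ ^ 1) d = b1 := by rw [pow_one]
  have hpow2 : (G.φ⁻¹ ^ 2) d = b2 := by
    have h := G.pow_inv_succ 1 d
    rw [pow_one] at h
    exact h
  have hpow3 : (G.φ⁻¹ ^ 3) d = b3 := by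
    have h := G.pow_inv_succ 2 d
    rw [hpow2] at h
    exact h
  have hαnb : ∀ x : G.D, ¬ G.bdry x → ¬ G.bdry (G.α x) :=
    fun x hx h => hx ((G.bdry_edge x).mp h)
  have hαm : ∀ x : G.D, G.MeetsBoundary x → G.MeetsBoundary (G.α x) :=
    fun x hx => (G.meets_alpha x).mpr hx
  by_cases hbb2 : G.bdry b2
  · -- Case A : the face has a single edge dart b1
    have hcl : ∀ y : G.D, G.faceOf y = F → ¬ G.bdry y → y = b1 := by
      intro y hyF hy
      obtain ⟨j, hj1, hjk, hye⟩ := G.classify hdF hdb hdnb hm1 1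
        (by show G.bdry ((G.φ⁻¹ ^ 2) d); rw [hpow2]; exact hbb2) hyF hy
      interval_cases j
      rw [hpow1] at hye; exact hye
    have hmeet : ∀ x, G.RegionDart {F} x → G.MeetsBoundary x := by
      intro x hx
      obtain ⟨hnbx, hor⟩ := hx
      rcases hor with h | h
      · have := hcl x (Set.mem_singleton_iff.mp h) hnbx
        rw [this]; exact hmb1
      · have h2 := hcl (G.α x) (Set.mem_singleton_iff.mp h) (hαnb x hnbx)
        have hx' : x = G.α b1 := by rw [← G.α_invol x, h2]
        rw [hx']; exact hαm _ hmb1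
    have hin := G.incoming_eq_zero {F} hmeet
    have hout : 1 ≤ G.outgoing {F} := by
      apply G.outgoing_ge {F} 1 {b1, G.α b1}
      · intro y hy
        simp only [Set.mem_insert_iff, Set.mem_singleton_iff] at hy
        rcases hy with rfl | rfl
        · exact ⟨⟨hnb1, Or.inl (Set.mem_singleton_iff.mpr hf1)⟩, hmb1⟩
        · exact ⟨⟨hαnb b1 hnb1,
            Or.inr (by rw [G.α_invol]; exact Set.mem_singleton_iff.mpr hf1)⟩, hαm _ hmb1⟩
      · rw [Set.ncard_pair (fun h => G.α_fpf b1 h.symm)]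
    exact ⟨{F}, hreg, by omega⟩
  · by_cases hbb3 : G.bdry b3
    · -- Case B : exactly the edge darts b1, b2
      have hmb2 : G.MeetsBoundary b2 :=
        G.meets_of_phi_inv_bdry (by rw [← hb3]; exact hbb3)
      have hcl : ∀ y : G.D, G.faceOf y = F → ¬ G.bdry y → y = b1 ∨ y = b2 := by
        intro y hyF hy
        obtain ⟨j, hj1, hjk, hye⟩ := G.classify hdF hdb hdnb hm1 2
          (by show G.bdry ((G.φ⁻¹ ^ 3) d); rw [hpow3]; exact hbb3) hyF hy
        interval_cases j
        · left; rw [hpow1] at hye; exact hye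
        · right; rw [hpow2] at hye; exact hye
      have hmeet : ∀ x, G.RegionDart {F} x → G.MeetsBoundary x := by
        intro x hx
        obtain ⟨hnbx, hor⟩ := hx
        rcases hor with h | h
        · rcases hcl x (Set.mem_singleton_iff.mp h) hnbx with h2 | h2
          · rw [h2]; exact hmb1
          · rw [h2]; exact hmb2
        · rcases hcl (G.α x) (Set.mem_singleton_iff.mp h) (hαnb x hnbx) with h2 | h2
          · have hx' : x = G.α b1 := by rw [← G.α_invol x, h2]
            rw [hx']; exact hαm _ hmb1
          · have hx' : x = G.α b2 := by rw [← G.α_invol x, h2]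
            rw [hx']; exact hαm _ hmb2
      have hin := G.incoming_eq_zero {F} hmeet
      have hout : 1 ≤ G.outgoing {F} := by
        apply G.outgoing_ge {F} 1 {b1, G.α b1}
        · intro y hy
          simp only [Set.mem_insert_iff, Set.mem_singleton_iff] at hy
          rcases hy with rfl | rfl
          · exact ⟨⟨hnb1, Or.inl (Set.mem_singleton_iff.mpr hf1)⟩, hmb1⟩
          · exact ⟨⟨hαnb b1 hnb1,
              Or.inr (by rw [G.α_invol]; exact Set.mem_singleton_iff.mpr hf1)⟩, hαm _ hmb1⟩
        · rw [Set.ncard_pair (fun h => G.α_fpf b1 h.symm)]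
      exact ⟨{F}, hreg, by omega⟩
    · -- Case C : edge darts b1, b2, b3
      have hb4 : G.bdry (G.φ⁻¹ b3) := by
        by_contra h4
        have hpow4 : (G.φ⁻¹ ^ 4) d = G.φ⁻¹ b3 := by
          have h := G.pow_inv_succ 3 d
          rw [hpow3] at h
          exact h
        have hkey : ∀ i j : ℕ, i < j → (G.φ⁻¹ ^ i) d = (G.φ⁻¹ ^ j) d →
            d = (G.φ⁻¹ ^ (j - i)) d := by
          intro i j hij h
          rw [show j = i + (j - i) by omega, pow_add, Equiv.Perm.mul_apply] at h
          exact (Equiv.injective _) h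
        have hnbt : ∀ t : ℕ, 1 ≤ t → t ≤ 4 → ¬ G.bdry ((G.φ⁻¹ ^ t) d) := by
          intro t h1t h4t
          interval_cases t
          · rw [hpow1]; exact hnb1
          · rw [hpow2]; exact hbb2
          · rw [hpow3]; exact hbb3
          · rw [hpow4]; exact h4
        have hne : ∀ i j : ℕ, 1 ≤ i → i < j → j ≤ 4 → (G.φ⁻¹ ^ i) d ≠ (G.φ⁻¹ ^ j) d := by
          intro i j h1 hij h4' h
          exact hnbt (j - i) (by omega) (by omega)
            (by rw [← hkey i j hij h]; exact hdb)
        have hsub : ({(G.φ⁻¹ ^ 1) d, (G.φ⁻¹ ^ 2) d, (G.φ⁻¹ ^ 3) d, (G.φ⁻¹ ^ 4) d} : Set G.D)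
            ⊆ {x : G.D | G.faceOf x = F ∧ ¬ G.bdry x} := by
          intro y hy
          simp only [Set.mem_insert_iff, Set.mem_singleton_iff] at hy
          rcases hy with rfl | rfl | rfl | rfl
          · exact ⟨by rw [G.faceOf_pow_inv]; exact hdF, hnbt 1 (by norm_num) (by norm_num)⟩
          · exact ⟨by rw [G.faceOf_pow_inv]; exact hdF, hnbt 2 (by norm_num) (by norm_num)⟩
          · exact ⟨by rw [G.faceOf_pow_inv]; exact hdF, hnbt 3 (by norm_num) (by norm_num)⟩
          · exact ⟨by rw [G.faceOf_pow_inv]; exact hdF, hnbt 4 (by norm_num) (by norm_num)⟩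
        have hcard : ({(G.φ⁻¹ ^ 1) d, (G.φ⁻¹ ^ 2) d, (G.φ⁻¹ ^ 3) d, (G.φ⁻¹ ^ 4) d}
            : Set G.D).ncard = 4 := by
          rw [Set.ncard_insert_of_notMem (by
              simp only [Set.mem_insert_iff, Set.mem_singleton_iff]
              push_neg
              exact ⟨hne 1 2 (by norm_num) (by norm_num) (by norm_num),
                hne 1 3 (by norm_num) (by norm_num) (by norm_num),
                hne 1 4 (by norm_num) (by norm_num) (by norm_num)⟩),
            Set.ncard_insert_of_notMem (by
              simp only [Set.mem_insert_iff, Set.mem_singleton_iff]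
              push_neg
              exact ⟨hne 2 3 (by norm_num) (by norm_num) (by norm_num),
                hne 2 4 (by norm_num) (by norm_num) (by norm_num)⟩),
            Set.ncard_pair (hne 3 4 (by norm_num) (by norm_num) (by norm_num))]
        have hle2 : 4 ≤ G.faceEdges F := by
          have hmono := Set.ncard_le_ncard hsub (Set.toFinite _)
          rw [hcard] at hmono
          have hfe : G.faceEdges F
              = ({x : G.D | G.faceOf x = F ∧ ¬ G.bdry x} : Set G.D).ncard :=
            G.nat_card_eq_ncard _
          omega
        omega
      have hmb3 : G.MeetsBoundary b3 := G.meets_of_phi_inv_bdry hb4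
      have hcl : ∀ y : G.D, G.faceOf y = F → ¬ G.bdry y → y = b1 ∨ y = b2 ∨ y = b3 := by
        intro y hyF hy
        obtain ⟨j, hj1, hjk, hye⟩ := G.classify hdF hdb hdnb hm1 3
          (by show G.bdry ((G.φ⁻¹ ^ 4) d)
              have h := G.pow_inv_succ 3 d
              rw [hpow3] at h
              rw [show (4:ℕ) = 3 + 1 from rfl];
              rw [G.pow_inv_succ, hpow3]
              exact hb4) hyF hy
        interval_cases j
        · left; rw [hpow1] at hye; exact hye
        · right; left; rw [hpow2] at hye; exact hye
        · right; right; rw [hpow3] at hye; exact hye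
      by_cases hC1 : b3 = G.α b1
      · -- monogon: contradiction with absence of small internal faces
        exfalso
        have h1 : G.σ (G.α b2) = b1 := by
          rw [← G.phi_apply, hb2, perm_apply_inv_self]
        have h2 : G.σ b1 = b2 := by
          have h3 : G.σ (G.α b3) = b2 := by
            rw [← G.phi_apply, hb3, perm_apply_inv_self]
          rw [hC1, G.α_invol] at h3
          exact h3
        have ha : G.α b2 = G.σ (G.σ b1) := by
          have h4 := congrArg (⇑G.σ⁻¹) h1
          rw [perm_inv_apply_self] at h4
          rw [h4, G.sigma_inv_apply]
        have hfix : G.φ (G.α b2) = G.α b2 := by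
          rw [G.phi_apply, G.α_invol, ha, ← h2]
        have hnb2 : ¬ G.bdry b2 := hbb2
        have hM : ∀ x, G.faceOf x = G.faceOf (G.α b2) → x = G.α b2 := by
          intro x hx
          obtain ⟨i, hi⟩ := (G.faceOf_eq_iff.mp hx).symm
          rw [← hi, Equiv.Perm.zpow_apply_eq_self_of_apply_eq_self hfix i]
        have hint : G.InternalFace (G.faceOf (G.α b2)) := by
          constructor
          · intro h
            exact hαnb b2 hnb2 (G.bdry_of_outer (by rw [← h]))
          · intro x hx
            rw [hM x hx]
            exact hαnb b2 hnb2
        have hsize : G.faceEdges (G.faceOf (G.α b2)) ≤ 5 := by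
          have hsub : {x : G.D | G.faceOf x = G.faceOf (G.α b2) ∧ ¬ G.bdry x}
              ⊆ ({G.α b2} : Set G.D) := fun x hx => hM x hx.1
          have hfe : G.faceEdges (G.faceOf (G.α b2))
              = ({x : G.D | G.faceOf x = G.faceOf (G.α b2) ∧ ¬ G.bdry x} : Set G.D).ncard :=
            G.nat_card_eq_ncard _
          have hmono := Set.ncard_le_ncard hsub (Set.toFinite _)
          rw [Set.ncard_singleton] at hmono
          omega
        exact hsmall ⟨_, hint, hsize⟩
      · -- growth region from the triangle-like boundary face
        have hf3 : G.faceOf b3 = F := by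
          rw [hb3, G.faceOf_phi_inv, hb2, G.faceOf_phi_inv]; exact hf1
        have h13 : b1 ≠ b3 := by
          intro h
          have hkey : d = (G.φ⁻¹ ^ 2) d := by
            have h' : (G.φ⁻¹ ^ 1) d = (G.φ⁻¹ ^ 3) d := by rw [hpow1, hpow3]; exact h
            rw [show (3:ℕ) = 1 + 2 from rfl, pow_add, Equiv.Perm.mul_apply] at h'
            exact (Equiv.injective _) h'
          rw [hpow2] at hkey
          exact hbb2 (hkey ▸ hdb)
        have h1a3 : b1 ≠ G.α b3 := by
          intro h
          apply hC1
          rw [h, G.α_invol]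
        have ha13 : G.α b1 ≠ b3 := fun h => hC1 h.symm
        have ha1a3 : G.α b1 ≠ G.α b3 := fun h => h13 ((Equiv.injective _) h)
        have hin : G.incoming {F} ≤ 1 := by
          apply G.incoming_le {F} 1 {b2, G.α b2}
          · intro x hx
            obtain ⟨⟨hnbx, hor⟩, hnm⟩ := hx
            simp only [Set.mem_insert_iff, Set.mem_singleton_iff]
            rcases hor with h | h
            · rcases hcl x (Set.mem_singleton_iff.mp h) hnbx with h2 | h2 | h2
              · exact absurd (h2 ▸ hmb1) hnm
              · left; exact h2
              · exact absurd (h2 ▸ hmb3) hnm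
            · rcases hcl (G.α x) (Set.mem_singleton_iff.mp h) (hαnb x hnbx) with h2 | h2 | h2
              · have hx' : x = G.α b1 := by rw [← G.α_invol x, h2]
                exact absurd (hx' ▸ hαm _ hmb1) hnm
              · right; rw [← G.α_invol x, h2]
              · have hx' : x = G.α b3 := by rw [← G.α_invol x, h2]
                exact absurd (hx' ▸ hαm _ hmb3) hnm
          · calc ({b2, G.α b2} : Set G.D).ncard ≤ ({G.α b2} : Set G.D).ncard + 1 :=
                Set.ncard_insert_le _ _
              _ ≤ 2 * 1 := by rw [Set.ncard_singleton]
        have hout : 2 ≤ G.outgoing {F} := by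
          apply G.outgoing_ge {F} 2 {b1, G.α b1, b3, G.α b3}
          · intro y hy
            simp only [Set.mem_insert_iff, Set.mem_singleton_iff] at hy
            rcases hy with rfl | rfl | rfl | rfl
            · exact ⟨⟨hnb1, Or.inl (Set.mem_singleton_iff.mpr hf1)⟩, hmb1⟩
            · exact ⟨⟨hαnb b1 hnb1,
                Or.inr (by rw [G.α_invol]; exact Set.mem_singleton_iff.mpr hf1)⟩, hαm _ hmb1⟩
            · exact ⟨⟨hbb3, Or.inl (Set.mem_singleton_iff.mpr hf3)⟩, hmb3⟩
            · exact ⟨⟨hαnb b3 hbb3,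
                Or.inr (by rw [G.α_invol]; exact Set.mem_singleton_iff.mpr hf3)⟩, hαm _ hmb3⟩
          · have hcard : ({b1, G.α b1, b3, G.α b3} : Set G.D).ncard = 4 := by
              rw [Set.ncard_insert_of_notMem (by
                  simp only [Set.mem_insert_iff, Set.mem_singleton_iff]
                  push_neg
                  exact ⟨fun h => G.α_fpf b1 h.symm, h13, h1a3⟩),
                Set.ncard_insert_of_notMem (by
                  simp only [Set.mem_insert_iff, Set.mem_singleton_iff]
                  push_neg
                  exact ⟨ha13, ha1a3⟩),
                Set.ncard_pair (fun h => G.α_fpf b3 h.symm)]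
            omega
        exact ⟨{F}, hreg, by omega⟩
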